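/- Let p be an odd prime number and let G be a group of order p^5 generated by f1, f2, f3, f4, f5 with Z(G) = ⟨f5⟩ and relations [f1,f2] = [f3,f4] = f5, [f1,f3] = [f2,f3] = [f1,f4] = [f2,f4] = 1, f5^p = 1, together with either (a) f1^p = f5 and f2^p = f3^p = f4^p = 1 (the group Φ_5(2111)), or (b) f1^p = f2^p = f3^p = f4^p = 1 (the group Φ_5(1^5)). Then B_0(G) = 0. -/

import Mathlib

/-- The coefficient group `ℚ/ℤ`. -/
abbrev QZ : Type := ℚ ⧸ AddSubgroup.zmultiples (1 : ℚ)

/-- A (inhomogeneous) 2-cocycle on `G` with values in `ℚ/ℤ` (trivial action). -/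
def IsGrpCocycle {G : Type*} [Group G] (f : G → G → QZ) : Prop :=
  ∀ g h k : G, f g h + f (g * h) k = f h k + f g (h * k)

/-- A 2-coboundary on `G` with values in `ℚ/ℤ` (trivial action). -/
def IsGrpCoboundary {G : Type*} [Group G] (f : G → G → QZ) : Prop :=
  ∃ c : G → QZ, ∀ g h : G, f g h = c g + c h - c (g * h)

/-- The additive group of 2-cocycles. -/
def cocycles2 (G : Type*) [Group G] : AddSubgroup (G → G → QZ) where
  carrier := {f | IsGrpCocycle f}
  zero_mem' := by intro g h k; simp
  add_mem' := by
    intro a b ha hb g h k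
    simp only [Pi.add_apply]
    rw [add_add_add_comm, ha g h k, hb g h k, add_add_add_comm]
  neg_mem' := by
    intro a ha g h k
    simp only [Pi.neg_apply, ← neg_add]
    rw [ha g h k]

/-- The subgroup of 2-coboundaries inside the group of 2-cocycles. -/
def coboundaries2 (G : Type*) [Group G] : AddSubgroup (cocycles2 G) where
  carrier := {f | IsGrpCoboundary (f : G → G → QZ)}
  zero_mem' := ⟨0, by intro g h; simp⟩
  add_mem' := by
    rintro a b ⟨c, hc⟩ ⟨d, hd⟩
    refine ⟨c + d, fun g h => ?_⟩
    have : ((a + b : cocycles2 G) : G → G → QZ) g h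
        = (a : G → G → QZ) g h + (b : G → G → QZ) g h := rfl
    rw [this, hc g h, hd g h]
    simp only [Pi.add_apply]
    abel
  neg_mem' := by
    rintro a ⟨c, hc⟩
    refine ⟨-c, fun g h => ?_⟩
    have : ((-a : cocycles2 G) : G → G → QZ) g h = -((a : G → G → QZ) g h) := rfl
    rw [this, hc g h]
    simp only [Pi.neg_apply]
    abel

/-- The second cohomology group `H²(G, ℚ/ℤ)` (trivial action), as cocycles mod coboundaries. -/
abbrev H2 (G : Type*) [Group G] : Type _ := cocycles2 G ⧸ coboundaries2 G

/-- A group is bicyclic if it is cyclic or the direct product of two cyclic groups. -/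
def IsBicyclic (A : Type*) [Group A] : Prop :=
  IsCyclic A ∨ ∃ B C : Subgroup A, IsCyclic B ∧ IsCyclic C ∧ Nonempty (A ≃* B × C)

/-- The restriction of `f` to every bicyclic subgroup is a coboundary. -/
def RestrictsToCoboundaries {G : Type*} [Group G] (f : G → G → QZ) : Prop :=
  ∀ A : Subgroup G, IsBicyclic A → IsGrpCoboundary (fun a b : A => f a b)

/-- The Bogomolov multiplier `B₀(G)`: the subgroup of `H²(G, ℚ/ℤ)` consisting of the classes
whose restriction to every bicyclic subgroup of `G` vanishes. -/
def B0 (G : Type*) [Group G] : AddSubgroup (H2 G) where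
  carrier := {x | ∃ f : cocycles2 G,
    (QuotientAddGroup.mk f : H2 G) = x ∧ RestrictsToCoboundaries (f : G → G → QZ)}
  zero_mem' := by
    refine ⟨0, rfl, fun A _ => ⟨0, fun a b => ?_⟩⟩
    simp
  add_mem' := by
    rintro x y ⟨f, rfl, hf⟩ ⟨g, rfl, hg⟩
    refine ⟨f + g, rfl, fun A hA => ?_⟩
    obtain ⟨c, hc⟩ := hf A hA
    obtain ⟨d, hd⟩ := hg A hA
    refine ⟨c + d, fun a b => ?_⟩
    have hc' : (f : G → G → QZ) (a : G) (b : G) = c a + c b - c (a * b) := hc a b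
    have hd' : (g : G → G → QZ) (a : G) (b : G) = d a + d b - d (a * b) := hd a b
    show ((f + g : cocycles2 G) : G → G → QZ) (a : G) (b : G)
        = (c + d) a + (c + d) b - (c + d) (a * b)
    have : ((f + g : cocycles2 G) : G → G → QZ) (a : G) (b : G)
        = (f : G → G → QZ) (a : G) (b : G) + (g : G → G → QZ) (a : G) (b : G) := rfl
    rw [this, hc', hd']
    simp only [Pi.add_apply]
    abel
  neg_mem' := by
    rintro x ⟨f, rfl, hf⟩
    refine ⟨-f, rfl, fun A hA => ?_⟩
    obtain ⟨c, hc⟩ := hf A hA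
    refine ⟨-c, fun a b => ?_⟩
    have hc' : (f : G → G → QZ) (a : G) (b : G) = c a + c b - c (a * b) := hc a b
    show ((-f : cocycles2 G) : G → G → QZ) (a : G) (b : G)
        = (-c) a + (-c) b - (-c) (a * b)
    have : ((-f : cocycles2 G) : G → G → QZ) (a : G) (b : G)
        = -((f : G → G → QZ) (a : G) (b : G)) := rfl
    rw [this, hc']
    simp only [Pi.neg_apply]
    abel

/-- The commutator `[g,h] = g⁻¹h⁻¹gh`. -/
def cmt {G : Type*} [Group G] (g h : G) : G := g⁻¹ * h⁻¹ * g * h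

open Subgroup

lemma QZ_exists_nsmul_eq (n : ℕ) (hn : n ≠ 0) (v : QZ) : ∃ u : QZ, n • u = v := by
  obtain ⟨q, rfl⟩ := QuotientAddGroup.mk_surjective v
  refine ⟨QuotientAddGroup.mk ((n : ℚ)⁻¹ * q), ?_⟩
  have : (n : ℕ) • ((n : ℚ)⁻¹ * q) = q := by
    rw [nsmul_eq_mul]
    field_simp
  calc n • (QuotientAddGroup.mk ((n : ℚ)⁻¹ * q) : QZ)
      = QuotientAddGroup.mk (n • ((n : ℚ)⁻¹ * q)) := rfl
    _ = QuotientAddGroup.mk q := by rw [this]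

lemma isCyclic_zpowers {G : Type*} [Group G] (x : G) : IsCyclic (zpowers x) := by
  refine ⟨⟨⟨x, mem_zpowers x⟩, ?_⟩⟩
  rintro ⟨y, hy⟩
  obtain ⟨k, rfl⟩ := Subgroup.mem_zpowers_iff.mp hy
  exact ⟨k, by ext; simp⟩

lemma two_gen_comm_group_bicyclic {H : Type*} [CommGroup H] [Finite H] (x y : H)
    (hgen : Subgroup.closure {x, y} = ⊤) (hdvd : orderOf y ∣ orderOf x) :
    ∃ B C : Subgroup H, IsCyclic B ∧ IsCyclic C ∧ Nonempty (H ≃* B × C) := by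
  set N := zpowers x with hN
  have hQgen : ∀ z : H ⧸ N, z ∈ zpowers (QuotientGroup.mk y : H ⧸ N) := by
    have h1 : Subgroup.map (QuotientGroup.mk' N) (Subgroup.closure {x, y}) = ⊤ :=
      hgen ▸ Subgroup.map_top_of_surjective _ (QuotientGroup.mk'_surjective N)
    have h2 : Subgroup.map (QuotientGroup.mk' N) (Subgroup.closure {x, y})
        = Subgroup.closure {(QuotientGroup.mk x : H ⧸ N), QuotientGroup.mk y} := by
      rw [MonoidHom.map_closure]
      congr 1
      simp [Set.image_insert_eq]
    have hx1 : (QuotientGroup.mk x : H ⧸ N) = 1 := by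
      rw [QuotientGroup.eq_one_iff]; exact mem_zpowers x
    intro z
    have : z ∈ Subgroup.closure {(QuotientGroup.mk x : H ⧸ N), QuotientGroup.mk y} := by
      rw [← h2, h1]; trivial
    rw [hx1] at this
    have h3 : ({(1 : H ⧸ N), QuotientGroup.mk y} : Set (H ⧸ N)) = {1} ∪ {QuotientGroup.mk y} := rfl
    rw [h3, Subgroup.closure_union, Subgroup.closure_singleton_one,
      bot_sup_eq, ← Subgroup.zpowers_eq_closure] at this
    exact this
  set q := orderOf (QuotientGroup.mk y : H ⧸ N) with hqdef
  have hq_dvd : q ∣ orderOf y := orderOf_map_dvd (QuotientGroup.mk' N) y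
  have hyq : y ^ q ∈ N := by
    rw [← QuotientGroup.eq_one_iff (G := H) (N := N), QuotientGroup.mk_pow]
    exact pow_orderOf_eq_one _
  obtain ⟨m, hm⟩ := Subgroup.mem_zpowers_iff.mp hyq
  have hypos : 0 < orderOf y := orderOf_pos y
  have hqpos : 0 < q := orderOf_pos _
  set r := orderOf y / q with hrdef
  have hr : orderOf y = q * r := (Nat.mul_div_cancel' hq_dvd).symm
  have hrpos : 0 < r := by
    rcases Nat.eq_zero_or_pos r with h | h
    · rw [h, Nat.mul_zero] at hr; omega
    · exact h
  obtain ⟨s, hs⟩ := hdvd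
  have hxmr : x ^ (m * r) = 1 := by
    rw [zpow_mul, hm, ← zpow_natCast, ← zpow_mul]
    have : (q : ℤ) * r = (orderOf y : ℤ) := by exact_mod_cast hr.symm
    rw [this, zpow_natCast, pow_orderOf_eq_one]
  have hdvd2 : (orderOf x : ℤ) ∣ m * r := orderOf_dvd_iff_zpow_eq_one.mpr hxmr
  have hqm : (q : ℤ) ∣ m := by
    have hox : orderOf x = q * s * r := by rw [hs, hr]; ring
    have h1 : ((q * s : ℕ) : ℤ) * r ∣ m * r := by
      have : (orderOf x : ℤ) = ((q * s : ℕ) : ℤ) * r := by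
        rw [hox]; push_cast; ring
      rwa [this] at hdvd2
    have h2 : ((q * s : ℕ) : ℤ) ∣ m := by
      have hrz : (r : ℤ) ≠ 0 := by exact_mod_cast hrpos.ne'
      exact (mul_dvd_mul_iff_right hrz).mp h1
    exact dvd_trans (by exact_mod_cast Dvd.intro s rfl) h2
  obtain ⟨m', hm'⟩ := hqm
  set y₂ := y * (x ^ m')⁻¹ with hy2def
  have hy₂q : y₂ ^ q = 1 := by
    rw [hy2def, mul_pow, inv_pow, ← zpow_natCast (x ^ m'), ← zpow_mul]
    have : m' * (q : ℤ) = m := by rw [hm']; ring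
    rw [this, hm]
    simp
  set B := zpowers x with hB
  set C := zpowers y₂ with hC
  have hφ : ∃ φ : B × C →* H, ∀ bc : B × C, φ bc = (bc.1 : H) * (bc.2 : H) := by
    refine ⟨(B.subtype.comp (MonoidHom.fst B C)) * (C.subtype.comp (MonoidHom.snd B C)), ?_⟩
    intro bc; rfl
  obtain ⟨φ, hφ⟩ := hφ
  have hsurj : Function.Surjective φ := by
    have hrange : Subgroup.closure {x, y} ≤ φ.range := by
      rw [Subgroup.closure_le]
      rintro z (rfl | rfl)
      · exact ⟨(⟨z, mem_zpowers z⟩, 1), by simp [hφ]⟩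
      · refine ⟨(⟨x ^ m', zpow_mem (mem_zpowers x) m'⟩, ⟨y₂, mem_zpowers y₂⟩), ?_⟩
        rw [hφ]
        show x ^ m' * y₂ = z
        rw [hy2def, mul_comm z, mul_inv_cancel_left]
    intro z
    have : z ∈ φ.range := by rw [hgen] at hrange; exact hrange trivial
    exact this
  have hcardQ : Nat.card (H ⧸ N) = q := (orderOf_eq_card_of_forall_mem_zpowers hQgen).symm
  have hcardH : Nat.card H = q * orderOf x := by
    rw [Subgroup.card_eq_card_quotient_mul_card_subgroup N, hcardQ, hN, Nat.card_zpowers]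
  have hcardBC : Nat.card (B × C) ≤ Nat.card H := by
    have h1 : Nat.card (B × C) = orderOf x * orderOf y₂ := by
      rw [Nat.card_prod, hB, hC, Nat.card_zpowers, Nat.card_zpowers]
    have h2 : orderOf y₂ ∣ q := orderOf_dvd_of_pow_eq_one hy₂q
    have h3 : orderOf y₂ ≤ q := Nat.le_of_dvd hqpos h2
    rw [h1, hcardH]
    calc orderOf x * orderOf y₂ ≤ orderOf x * q := Nat.mul_le_mul_left _ h3
      _ = q * orderOf x := Nat.mul_comm _ _
  have hcard_eq : Nat.card (B × C) = Nat.card H :=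
    le_antisymm hcardBC (Nat.card_le_card_of_surjective φ hsurj)
  have hbij : Function.Bijective φ :=
    (Nat.bijective_iff_surjective_and_card φ).mpr ⟨hsurj, hcard_eq⟩
  exact ⟨B, C, _root_.isCyclic_zpowers x, _root_.isCyclic_zpowers y₂, ⟨(MulEquiv.ofBijective φ hbij).symm⟩⟩

lemma bicyclic_closure_aux {G : Type*} [Group G] [Finite G]
    {x y : G} (hxy : x * y = y * x) (hdvd : orderOf y ∣ orderOf x) :
    IsBicyclic (Subgroup.closure ({x, y} : Set G)) := by
  set A := Subgroup.closure ({x, y} : Set G) with hA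
  have hcomm : ∀ a ∈ A, ∀ b ∈ A, a * b = b * a := by
    intro a ha b hb
    have : Commute a b := by
      induction ha, hb using closure_induction₂ with
      | mem a b ha hb =>
        rcases ha with rfl | ha <;> rcases hb with rfl | hb
        · rfl
        · rw [Set.mem_singleton_iff] at hb; subst hb; exact hxy
        · rw [Set.mem_singleton_iff] at ha; subst ha; exact hxy.symm
        · rw [Set.mem_singleton_iff] at ha hb; subst ha; subst hb; rfl
      | one_left b hb => exact Commute.one_left b
      | one_right a ha => exact Commute.one_right a
      | mul_left a b c _ _ _ h1 h2 => exact h1.mul_left h2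
      | mul_right a b c _ _ _ h1 h2 => exact h1.mul_right h2
      | inv_left a b _ _ h => exact h.inv_left
      | inv_right a b _ _ h => exact h.inv_right
    exact this
  letI : CommGroup ↥A :=
    { (inferInstance : Group ↥A) with
      mul_comm := fun a b => Subtype.ext (hcomm a.1 a.2 b.1 b.2) }
  have hxA : x ∈ A := subset_closure (by left; rfl)
  have hyA : y ∈ A := subset_closure (by right; rfl)
  set x' : ↥A := ⟨x, hxA⟩ with hx'
  set y' : ↥A := ⟨y, hyA⟩ with hy'
  have hgen : Subgroup.closure ({x', y'} : Set ↥A) = ⊤ := by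
    have hpre : ((↑) : ↥A → G) ⁻¹' ({x, y} : Set G) = ({x', y'} : Set ↥A) := by
      ext a
      simp only [Set.mem_preimage, Set.mem_insert_iff, Set.mem_singleton_iff]
      constructor
      · rintro (h | h)
        · left; exact Subtype.ext h
        · right; exact Subtype.ext h
      · rintro (rfl | rfl)
        · left; rfl
        · right; rfl
    rw [← hpre]
    exact closure_closure_coe_preimage
  have hox : orderOf x' = orderOf x := by rw [← Subgroup.orderOf_coe x']
  have hoy : orderOf y' = orderOf y := by rw [← Subgroup.orderOf_coe y']
  have hdvd' : orderOf y' ∣ orderOf x' := by rw [hox, hoy]; exact hdvd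
  obtain ⟨B, C, hB, hC, he⟩ := two_gen_comm_group_bicyclic x' y' hgen hdvd'
  exact Or.inr ⟨B, C, hB, hC, he⟩

lemma bicyclic_closure_of_commute {G : Type*} [Group G] [Finite G] {p : ℕ} (hp : p.Prime)
    {n : ℕ} (hcard : Nat.card G = p ^ n) {x y : G} (hxy : x * y = y * x) :
    IsBicyclic (Subgroup.closure ({x, y} : Set G)) := by
  obtain ⟨i, hi, hox⟩ := (Nat.dvd_prime_pow hp).mp (hcard ▸ orderOf_dvd_natCard x)
  obtain ⟨j, hj, hoy⟩ := (Nat.dvd_prime_pow hp).mp (hcard ▸ orderOf_dvd_natCard y)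
  rcases le_total j i with h | h
  · exact bicyclic_closure_aux hxy (by rw [hox, hoy]; exact pow_dvd_pow p h)
  · rw [Set.pair_comm]
    exact bicyclic_closure_aux hxy.symm (by rw [hox, hoy]; exact pow_dvd_pow p h)

lemma sym_of_restricts {G : Type*} [Group G] [Finite G] {p : ℕ} (hp : p.Prime)
    {n : ℕ} (hcard : Nat.card G = p ^ n) {f : G → G → QZ}
    (hres : RestrictsToCoboundaries f) :
    ∀ x y : G, x * y = y * x → f x y = f y x := by
  intro x y hxy
  set A := Subgroup.closure ({x, y} : Set G) with hA
  obtain ⟨c, hc⟩ := hres A (bicyclic_closure_of_commute hp hcard hxy)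
  have hxA : x ∈ A := subset_closure (by left; rfl)
  have hyA : y ∈ A := subset_closure (by right; rfl)
  have h1 := hc ⟨x, hxA⟩ ⟨y, hyA⟩
  have h2 := hc ⟨y, hyA⟩ ⟨x, hxA⟩
  have hxy' : (⟨x, hxA⟩ : ↥A) * ⟨y, hyA⟩ = ⟨y, hyA⟩ * ⟨x, hxA⟩ := Subtype.ext hxy
  simp only at h1 h2
  rw [h1, h2, hxy']
  abel

section GenericGroup

variable {M : Type*} [Group M]

lemma cmt_mul (x y : M) : x * y = y * x * cmt x y := by unfold cmt; group

lemma commute_of_cmt_eq_one {x y : M} (h : cmt x y = 1) : x * y = y * x := by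
  have hxy := cmt_mul x y; rw [h, mul_one] at hxy; exact hxy

lemma cmt_eq_of_mul {x y z : M} (h : x * y = y * x * z) : cmt x y = z := by
  have : z = (y * x)⁻¹ * (x * y) := by rw [h]; group
  rw [this]; unfold cmt; group

lemma cmt_eq_one_of_comm {x y : M} (h : x * y = y * x) : cmt x y = 1 :=
  cmt_eq_of_mul (by rw [h, mul_one])

lemma central_inv {z : M} (hz : ∀ w, z * w = w * z) : ∀ w, z⁻¹ * w = w * z⁻¹ := by
  intro w
  have := hz w⁻¹
  calc z⁻¹ * w = z⁻¹ * w * z * z⁻¹ := by group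
    _ = z⁻¹ * (w * z) * z⁻¹ := by group
    _ = z⁻¹ * (z * w) * z⁻¹ := by rw [← hz w]
    _ = w * z⁻¹ := by group

lemma central_pow {z : M} (hz : ∀ w, z * w = w * z) (n : ℕ) : ∀ w, z ^ n * w = w * z ^ n := by
  induction n with
  | zero => intro w; simp
  | succ n ih =>
    intro w
    calc z ^ (n + 1) * w = z ^ n * (z * w) := by rw [pow_succ']; group
      _ = z ^ n * (w * z) := by rw [hz w]
      _ = (z ^ n * w) * z := by group
      _ = (w * z ^ n) * z := by rw [ih w]
      _ = w * z ^ (n + 1) := by rw [pow_succ]; group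

/-- If `z` is central and `y * x = x * y * z`, then `y ^ j * x ^ i = x ^ i * y ^ j * z ^ (i * j)`. -/
lemma central_swap_pow {x y z : M} (hz : ∀ w, z * w = w * z) (h : y * x = x * y * z) :
    ∀ i j : ℕ, y ^ j * x ^ i = x ^ i * y ^ j * z ^ (i * j) := by
  have step1 : ∀ i : ℕ, y * x ^ i = x ^ i * y * z ^ i := by
    intro i
    induction i with
    | zero => simp
    | succ i ih =>
      calc y * x ^ (i + 1) = (y * x ^ i) * x := by rw [pow_succ]; group
        _ = x ^ i * y * z ^ i * x := by rw [ih]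
        _ = x ^ i * y * (z ^ i * x) := by group
        _ = x ^ i * y * (x * z ^ i) := by rw [central_pow hz i x]
        _ = x ^ i * (y * x) * z ^ i := by group
        _ = x ^ i * (x * y * z) * z ^ i := by rw [h]
        _ = x ^ (i + 1) * y * (z * z ^ i) := by rw [pow_succ]; group
        _ = x ^ (i + 1) * y * z ^ (i + 1) := by rw [pow_succ' z i]
  intro i j
  induction j with
  | zero => simp
  | succ j ih =>
    calc y ^ (j + 1) * x ^ i = y ^ j * (y * x ^ i) := by rw [pow_succ']; group
      _ = y ^ j * (x ^ i * y * z ^ i) := by rw [step1]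
      _ = (y ^ j * x ^ i) * y * z ^ i := by group
      _ = x ^ i * y ^ j * z ^ (i * j) * y * z ^ i := by rw [ih]
      _ = x ^ i * y ^ j * (z ^ (i * j) * y) * z ^ i := by group
      _ = x ^ i * y ^ j * (y * z ^ (i * j)) * z ^ i := by rw [central_pow hz (i * j) y]
      _ = x ^ i * y ^ (j + 1) * (z ^ (i * j) * z ^ i) := by rw [pow_succ]; group
      _ = x ^ i * y ^ (j + 1) * z ^ (i * (j + 1)) := by rw [← pow_add]; ring_nf

/-- If `cmt x y` is central then `cmt (x ^ n) y = (cmt x y) ^ n`. -/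
lemma cmt_pow_left {x y : M} (hz : ∀ w, cmt x y * w = w * cmt x y) (n : ℕ) :
    cmt (x ^ n) y = cmt x y ^ n := by
  have h := cmt_mul x y
  have key := central_swap_pow hz h 1 n
  simp only [pow_one, one_mul] at key
  exact cmt_eq_of_mul key

lemma key_calc {A B C D z1 z2 : M}
    (hz1 : ∀ w, z1 * w = w * z1) (hz2 : ∀ w, z2 * w = w * z2)
    (hAB : A * B = B * A * z1) (hCD : C * D = D * C * z2)
    (hAD : A * D = D * A) (hBC : B * C = C * B) :
    (B * D⁻¹) * (A * C) = (A * C) * (B * D⁻¹) * (z2 * z1⁻¹) := by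
  have hADi : D⁻¹ * A = A * D⁻¹ := by
    calc D⁻¹ * A = D⁻¹ * (A * D) * D⁻¹ := by group
      _ = D⁻¹ * (D * A) * D⁻¹ := by rw [hAD]
      _ = A * D⁻¹ := by group
  have hBA : B * A = A * B * z1⁻¹ := by rw [hAB]; group
  have hDC : D⁻¹ * C = C * D⁻¹ * z2 := by
    calc D⁻¹ * C = D⁻¹ * (C * D) * D⁻¹ := by group
      _ = D⁻¹ * (D * C * z2) * D⁻¹ := by rw [hCD]
      _ = C * (z2 * D⁻¹) := by group
      _ = C * (D⁻¹ * z2) := by rw [hz2 D⁻¹]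
      _ = C * D⁻¹ * z2 := by group
  calc B * D⁻¹ * (A * C) = B * (D⁻¹ * A) * C := by group
    _ = B * (A * D⁻¹) * C := by rw [hADi]
    _ = (B * A) * (D⁻¹ * C) := by group
    _ = (A * B * z1⁻¹) * (D⁻¹ * C) := by rw [hBA]
    _ = A * B * (z1⁻¹ * (D⁻¹ * C)) := by group
    _ = A * B * ((D⁻¹ * C) * z1⁻¹) := by rw [central_inv hz1 (D⁻¹ * C)]
    _ = A * B * ((C * D⁻¹ * z2) * z1⁻¹) := by rw [hDC]
    _ = A * (B * C) * D⁻¹ * z2 * z1⁻¹ := by group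
    _ = A * (C * B) * D⁻¹ * z2 * z1⁻¹ := by rw [hBC]
    _ = A * C * (B * D⁻¹) * (z2 * z1⁻¹) := by group

end GenericGroup

section GenericGroup2
variable {M : Type*} [Group M]

lemma cmt_one_left (y : M) : cmt (1 : M) y = 1 := by unfold cmt; group

lemma rel_symm {x y c : M} (h : x * y = y * x * c) : y * x = x * y * c⁻¹ := by
  rw [h]; group

lemma central_shift_rel {x y z w c : M} (h : x * y = y * x * c)
    (hz : ∀ v, z * v = v * z) (hw : ∀ v, w * v = v * w) :
    (x * z) * (y * w) = (y * w) * (x * z) * c := by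
  calc x * z * (y * w) = x * (z * y) * w := by group
    _ = x * (y * z) * w := by rw [hz y]
    _ = (x * y) * (z * w) := by group
    _ = (y * x * c) * (z * w) := by rw [h]
    _ = y * x * (c * z) * w := by group
    _ = y * x * (z * c) * w := by rw [← hz c]
    _ = y * (x * z) * (c * w) := by group
    _ = y * (x * z) * (w * c) := by rw [← hw c]
    _ = y * ((x * z) * w) * c := by group
    _ = y * (w * (x * z)) * c := by rw [← hw (x * z)]
    _ = (y * w) * (x * z) * c := by group

lemma central_shift_comm {x y z w : M} (h : x * y = y * x)
    (hz : ∀ v, z * v = v * z) (hw : ∀ v, w * v = v * w) :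
    (x * z) * (y * w) = (y * w) * (x * z) := by
  have h' : x * y = y * x * 1 := by rw [mul_one]; exact h
  have := central_shift_rel h' hz hw
  rwa [mul_one] at this

lemma cmt_central_eq_one {x y : M} (hx : ∀ v, x * v = v * x) : cmt x y = 1 := by
  apply cmt_eq_one_of_comm
  exact hx y

end GenericGroup2

section Collection
variable {M : Type*} [Group M]

lemma collection (p : ℕ) (hp2 : 2 ≤ p)
    (b1 b2 b3 b4 d : M)
    (hd : ∀ w, d * w = w * d)
    (h21 : b2 * b1 = b1 * b2 * d)
    (h43 : b4 * b3 = b3 * b4 * d)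
    (h31 : b3 * b1 = b1 * b3) (h41 : b4 * b1 = b1 * b4)
    (h32 : b3 * b2 = b2 * b3) (h42 : b4 * b2 = b2 * b4)
    (e1 e2 e3 e4 : ℕ)
    (hb1 : b1 ^ p = d ^ e1) (hb2 : b2 ^ p = d ^ e2) (hb3 : b3 ^ p = d ^ e3)
    (hb4 : b4 ^ p = d ^ e4) (hdp : d ^ p = 1) :
    ∃ S : Subgroup M, b1 ∈ S ∧ b2 ∈ S ∧ b3 ∈ S ∧ b4 ∈ S ∧ d ∈ S ∧
      (S : Set M).Finite ∧ Nat.card S ≤ p ^ 5 := by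
  classical
  have hcsw : ∀ x y : M, x * y = y * x → ∀ k s : ℕ, x ^ k * y ^ s = y ^ s * x ^ k := by
    intro x y h k s
    exact (show Commute x y from h).pow_pow k s
  set ψ : ℕ → ℕ → ℕ → ℕ → ℕ → M :=
    fun i j k l m => b1 ^ i * b2 ^ j * b3 ^ k * b4 ^ l * d ^ m with hψ
  have hdpow : ∀ (s : ℕ) (w : M), d ^ s * w = w * d ^ s := fun s => central_pow hd s
  have Ad : ∀ i j k l m s, ψ i j k l m * d ^ s = ψ i j k l (m + s) := by
    intro i j k l m s
    simp only [hψ]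
    rw [mul_assoc (b1 ^ i * b2 ^ j * b3 ^ k * b4 ^ l), ← pow_add]
  have A4 : ∀ i j k l m s, ψ i j k l m * b4 ^ s = ψ i j k (l + s) m := by
    intro i j k l m s
    simp only [hψ]
    rw [mul_assoc (b1 ^ i * b2 ^ j * b3 ^ k * b4 ^ l), hdpow m (b4 ^ s),
      ← mul_assoc (b1 ^ i * b2 ^ j * b3 ^ k * b4 ^ l),
      mul_assoc (b1 ^ i * b2 ^ j * b3 ^ k), ← pow_add]
  have A3 : ∀ i j k l m s, ψ i j k l m * b3 ^ s = ψ i j (k + s) l (m + l * s) := by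
    intro i j k l m s
    simp only [hψ]
    rw [mul_assoc (b1 ^ i * b2 ^ j * b3 ^ k * b4 ^ l), hdpow m (b3 ^ s),
      ← mul_assoc (b1 ^ i * b2 ^ j * b3 ^ k * b4 ^ l),
      mul_assoc (b1 ^ i * b2 ^ j * b3 ^ k), central_swap_pow hd h43 s l,
      ← mul_assoc (b1 ^ i * b2 ^ j * b3 ^ k), ← mul_assoc (b1 ^ i * b2 ^ j * b3 ^ k),
      mul_assoc (b1 ^ i * b2 ^ j), ← pow_add,
      mul_assoc (b1 ^ i * b2 ^ j * b3 ^ (k + s) * b4 ^ l), ← pow_add]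
    have hexp : s * l + m = m + l * s := by ring
    rw [hexp]
  have A2 : ∀ i j k l m s, ψ i j k l m * b2 ^ s = ψ i (j + s) k l m := by
    intro i j k l m s
    simp only [hψ]
    rw [mul_assoc (b1 ^ i * b2 ^ j * b3 ^ k * b4 ^ l), hdpow m (b2 ^ s),
      ← mul_assoc (b1 ^ i * b2 ^ j * b3 ^ k * b4 ^ l),
      mul_assoc (b1 ^ i * b2 ^ j * b3 ^ k), hcsw b4 b2 h42 l s,
      ← mul_assoc (b1 ^ i * b2 ^ j * b3 ^ k),
      mul_assoc (b1 ^ i * b2 ^ j), hcsw b3 b2 h32 k s,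
      ← mul_assoc (b1 ^ i * b2 ^ j),
      mul_assoc (b1 ^ i), ← pow_add]
  have A1 : ∀ i j k l m s, ψ i j k l m * b1 ^ s = ψ (i + s) j k l (m + j * s) := by
    intro i j k l m s
    simp only [hψ]
    rw [mul_assoc (b1 ^ i * b2 ^ j * b3 ^ k * b4 ^ l), hdpow m (b1 ^ s),
      ← mul_assoc (b1 ^ i * b2 ^ j * b3 ^ k * b4 ^ l),
      mul_assoc (b1 ^ i * b2 ^ j * b3 ^ k), hcsw b4 b1 h41 l s,
      ← mul_assoc (b1 ^ i * b2 ^ j * b3 ^ k),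
      mul_assoc (b1 ^ i * b2 ^ j), hcsw b3 b1 h31 k s,
      ← mul_assoc (b1 ^ i * b2 ^ j),
      mul_assoc (b1 ^ i), central_swap_pow hd h21 s j,
      ← mul_assoc (b1 ^ i), ← mul_assoc (b1 ^ i), ← pow_add,
      mul_assoc (b1 ^ (i + s) * b2 ^ j), hdpow (s * j) (b3 ^ k),
      ← mul_assoc (b1 ^ (i + s) * b2 ^ j),
      mul_assoc (b1 ^ (i + s) * b2 ^ j * b3 ^ k), hdpow (s * j) (b4 ^ l),
      ← mul_assoc (b1 ^ (i + s) * b2 ^ j * b3 ^ k),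
      mul_assoc (b1 ^ (i + s) * b2 ^ j * b3 ^ k * b4 ^ l), ← pow_add]
    have hexp : s * j + m = m + j * s := by ring
    rw [hexp]
  have Pmul : ∀ i j k l m i' j' k' l' m', ψ i j k l m * ψ i' j' k' l' m'
      = ψ (i + i') (j + j') (k + k') (l + l') (m + j * i' + l * k' + m') := by
    intro i j k l m i' j' k' l' m'
    have expand : ψ i j k l m * ψ i' j' k' l' m'
        = ψ i j k l m * b1 ^ i' * b2 ^ j' * b3 ^ k' * b4 ^ l' * d ^ m' := by
      simp only [hψ, mul_assoc]
    rw [expand, A1, A2, A3, A4, Ad]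
  have hdm : ∀ m : ℕ, d ^ m = d ^ (m % p) := by
    intro m
    conv_lhs => rw [← Nat.mod_add_div m p]
    rw [pow_add, pow_mul, hdp, one_pow, mul_one]
  have Rm : ∀ i j k l m, ψ i j k l m = ψ i j k l (m % p) := by
    intro i j k l m
    simp only [hψ]
    rw [hdm m]
  -- single-generator power collapse
  have E1 : ∀ q : ℕ, ψ (p * q) 0 0 0 0 = ψ 0 0 0 0 (e1 * q) := by
    intro q
    simp only [hψ, pow_zero, one_mul, mul_one]
    rw [pow_mul, hb1, ← pow_mul]
  have E2 : ∀ q : ℕ, ψ 0 (p * q) 0 0 0 = ψ 0 0 0 0 (e2 * q) := by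
    intro q
    simp only [hψ, pow_zero, one_mul, mul_one]
    rw [pow_mul, hb2, ← pow_mul]
  have E3 : ∀ q : ℕ, ψ 0 0 (p * q) 0 0 = ψ 0 0 0 0 (e3 * q) := by
    intro q
    simp only [hψ, pow_zero, one_mul, mul_one]
    rw [pow_mul, hb3, ← pow_mul]
  have E4 : ∀ q : ℕ, ψ 0 0 0 (p * q) 0 = ψ 0 0 0 0 (e4 * q) := by
    intro q
    simp only [hψ, pow_zero, one_mul, mul_one]
    rw [pow_mul, hb4, ← pow_mul]
  have R1 : ∀ i j k l m, ψ i j k l m = ψ (i % p) j k l (e1 * (i / p) + m) := by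
    intro i j k l m
    calc ψ i j k l m = ψ (p * (i / p) + i % p) j k l m := by rw [Nat.div_add_mod]
      _ = ψ (p * (i / p)) 0 0 0 0 * ψ (i % p) j k l m := by rw [Pmul]; norm_num
      _ = ψ 0 0 0 0 (e1 * (i / p)) * ψ (i % p) j k l m := by rw [E1]
      _ = ψ (i % p) j k l (e1 * (i / p) + m) := by rw [Pmul]; norm_num
  have R2 : ∀ i j k l m, ψ i j k l m = ψ i (j % p) k l (e2 * (j / p) + m) := by
    intro i j k l m
    have h1 : ψ 0 (p * (j / p)) k l m = ψ 0 0 k l (e2 * (j / p) + m) := by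
      rw [show ψ 0 (p * (j / p)) k l m = ψ 0 (p * (j / p)) 0 0 0 * ψ 0 0 k l m by
        rw [Pmul]; norm_num, E2, Pmul]
      norm_num
    have h2 : ψ i j k l m = ψ i (j % p) 0 0 0 * ψ 0 (p * (j / p)) k l m := by
      rw [Pmul]; norm_num [Nat.mod_add_div]
    rw [h2, h1, Pmul]; norm_num
  have R3 : ∀ i j k l m, ψ i j k l m = ψ i j (k % p) l (e3 * (k / p) + m) := by
    intro i j k l m
    have h1 : ψ 0 0 (p * (k / p)) l m = ψ 0 0 0 l (e3 * (k / p) + m) := by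
      rw [show ψ 0 0 (p * (k / p)) l m = ψ 0 0 (p * (k / p)) 0 0 * ψ 0 0 0 l m by
        rw [Pmul]; norm_num, E3, Pmul]
      norm_num
    have h2 : ψ i j k l m = ψ i j (k % p) 0 0 * ψ 0 0 (p * (k / p)) l m := by
      rw [Pmul]; norm_num [Nat.mod_add_div]
    rw [h2, h1, Pmul]; norm_num
  have R4 : ∀ i j k l m, ψ i j k l m = ψ i j k (l % p) (e4 * (l / p) + m) := by
    intro i j k l m
    have h1 : ψ 0 0 0 (p * (l / p)) m = ψ 0 0 0 0 (e4 * (l / p) + m) := by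
      rw [show ψ 0 0 0 (p * (l / p)) m = ψ 0 0 0 (p * (l / p)) 0 * ψ 0 0 0 0 m by
        rw [Pmul]; norm_num, E4, Pmul]
      norm_num
    have h2 : ψ i j k l m = ψ i j k (l % p) 0 * ψ 0 0 0 (p * (l / p)) m := by
      rw [Pmul]; norm_num [Nat.mod_add_div]
    rw [h2, h1, Pmul]; norm_num
  have hppos : 0 < p := by omega
  have Pred : ∀ i j k l m, ∃ v : Fin p × Fin p × Fin p × Fin p × Fin p,
      ψ i j k l m = ψ v.1 v.2.1 v.2.2.1 v.2.2.2.1 v.2.2.2.2 := by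
    intro i j k l m
    refine ⟨⟨⟨i % p, Nat.mod_lt _ hppos⟩, ⟨j % p, Nat.mod_lt _ hppos⟩,
      ⟨k % p, Nat.mod_lt _ hppos⟩, ⟨l % p, Nat.mod_lt _ hppos⟩,
      ⟨(e4 * (l / p) + (e3 * (k / p) + (e2 * (j / p) + (e1 * (i / p) + m)))) % p,
        Nat.mod_lt _ hppos⟩⟩, ?_⟩
    simp only
    rw [R1 i, R2 (i % p), R3 (i % p) (j % p), R4 (i % p) (j % p) (k % p), Rm]
  set T : Finset M := (Finset.univ : Finset (Fin p × Fin p × Fin p × Fin p × Fin p)).image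
    (fun v => ψ v.1 v.2.1 v.2.2.1 v.2.2.2.1 v.2.2.2.2) with hT
  have hmemT : ∀ i j k l m, ψ i j k l m ∈ T := by
    intro i j k l m
    obtain ⟨v, hv⟩ := Pred i j k l m
    rw [hv, hT]
    exact Finset.mem_image_of_mem _ (Finset.mem_univ v)
  have hmul : ∀ a ∈ T, ∀ b ∈ T, a * b ∈ T := by
    intro a ha b hb
    rw [hT, Finset.mem_image] at ha hb
    obtain ⟨v, -, rfl⟩ := ha
    obtain ⟨w, -, rfl⟩ := hb
    rw [Pmul]
    exact hmemT _ _ _ _ _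
  have hψ1 : ψ 0 0 0 0 0 = 1 := by simp [hψ]
  have h1T : (1 : M) ∈ T := by rw [← hψ1]; exact hmemT 0 0 0 0 0
  have hinvT : ∀ a ∈ T, a⁻¹ ∈ T := by
    intro a ha
    have hpowT : ∀ n : ℕ, a ^ (n + 1) ∈ T := by
      intro n
      induction n with
      | zero => simpa using ha
      | succ n ih => rw [pow_succ]; exact hmul _ ih _ ha
    have key : ∀ u v : ℕ, u < v → a ^ (u + 1) = a ^ (v + 1) → a⁻¹ ∈ T := by
      intro u v huv heq
      have hk1 : a ^ (v - u) = 1 := by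
        have h2 : a ^ (u + 1) * a ^ (v - u) = a ^ (v + 1) := by
          rw [← pow_add]; congr 1; omega
        rw [heq] at h2
        nth_rewrite 2 [← mul_one (a ^ (v + 1))] at h2
        exact mul_left_cancel h2
      have hinv : a⁻¹ = a ^ (v - u - 1) := by
        symm
        apply eq_inv_of_mul_eq_one_left
        rw [← pow_succ]
        have : v - u - 1 + 1 = v - u := by omega
        rw [this, hk1]
      rcases Nat.eq_or_lt_of_le (show 1 ≤ v - u by omega) with h1 | h1
      · rw [hinv]
        have : v - u - 1 = 0 := by omega
        rw [this, pow_zero]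
        exact h1T
      · rw [hinv]
        have : v - u - 1 = (v - u - 2) + 1 := by omega
        rw [this]
        exact hpowT _
    obtain ⟨n, -, n', -, hne, heq⟩ := Finset.exists_ne_map_eq_of_card_lt_of_maps_to
      (s := (Finset.univ : Finset (Fin (T.card + 1))))
      (f := fun n : Fin (T.card + 1) => a ^ ((n : ℕ) + 1))
      (by simp) (fun n _ => hpowT n)
    have hval : (n : ℕ) ≠ (n' : ℕ) := fun h => hne (Fin.ext h)
    rcases Nat.lt_or_ge (n : ℕ) (n' : ℕ) with h | h
    · exact key _ _ h heq
    · exact key _ _ (by omega) heq.symm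
  refine ⟨{ carrier := ↑T
            mul_mem' := fun {a b} ha hb => by
              simpa using hmul a (by simpa using ha) b (by simpa using hb)
            one_mem' := by simpa using h1T
            inv_mem' := fun {a} ha => by
              simpa using hinvT a (by simpa using ha) }, ?_, ?_, ?_, ?_, ?_, ?_, ?_⟩
  · show b1 ∈ (T : Set M)
    have : ψ 1 0 0 0 0 = b1 := by simp [hψ]
    simpa [← this] using hmemT 1 0 0 0 0
  · show b2 ∈ (T : Set M)
    have : ψ 0 1 0 0 0 = b2 := by simp [hψ]
    simpa [← this] using hmemT 0 1 0 0 0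
  · show b3 ∈ (T : Set M)
    have : ψ 0 0 1 0 0 = b3 := by simp [hψ]
    simpa [← this] using hmemT 0 0 1 0 0
  · show b4 ∈ (T : Set M)
    have : ψ 0 0 0 1 0 = b4 := by simp [hψ]
    simpa [← this] using hmemT 0 0 0 1 0
  · show d ∈ (T : Set M)
    have : ψ 0 0 0 0 1 = d := by simp [hψ]
    simpa [← this] using hmemT 0 0 0 0 1
  · exact T.finite_toSet
  · have h1 : Nat.card {x // x ∈ (T : Set M)} = T.card := by
      rw [Nat.card_coe_set_eq, Set.ncard_coe_finset]
    have h2 : T.card ≤ p ^ 5 := by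
      refine le_trans (Finset.card_image_le) ?_
      simp [pow_succ]
      ring_nf
      omega
    calc Nat.card {x // x ∈ (T : Set M)} = T.card := h1
      _ ≤ p ^ 5 := h2

end Collection

/-- A normalized 2-cocycle. -/
structure NCocycle (G : Type) [Group G] where
  f : G → G → QZ
  cocycle : IsGrpCocycle f
  norm_left : ∀ g, f 1 g = 0
  norm_right : ∀ g, f g 1 = 0

namespace NCocycle

variable {G : Type} [Group G] (F : NCocycle G)

lemma inv_sym (g : G) : F.f g g⁻¹ = F.f g⁻¹ g := by
  have h := F.cocycle g g⁻¹ g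
  rw [mul_inv_cancel, inv_mul_cancel, F.norm_left, F.norm_right] at h
  -- h : F.f g g⁻¹ + 0 = F.f g⁻¹ g + 0
  simpa using h

end NCocycle

/-- The twisted central extension of `G` by `QZ` associated to a normalized cocycle. -/
@[ext]
structure TW {G : Type} [Group G] (F : NCocycle G) where
  g : G
  u : QZ

namespace TW

variable {G : Type} [Group G] {F : NCocycle G}

instance : Group (TW F) where
  mul x y := ⟨x.g * y.g, x.u + y.u + F.f x.g y.g⟩
  one := ⟨1, 0⟩
  inv x := ⟨x.g⁻¹, -x.u - F.f x.g x.g⁻¹⟩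
  mul_assoc x y z := by
    have h := F.cocycle x.g y.g z.g
    refine TW.ext (mul_assoc _ _ _) ?_
    show (x.u + y.u + F.f x.g y.g) + z.u + F.f (x.g * y.g) z.g
      = x.u + (y.u + z.u + F.f y.g z.g) + F.f x.g (y.g * z.g)
    have h' : F.f x.g y.g + F.f (x.g * y.g) z.g = F.f y.g z.g + F.f x.g (y.g * z.g) := h
    calc (x.u + y.u + F.f x.g y.g) + z.u + F.f (x.g * y.g) z.g
        = x.u + y.u + z.u + (F.f x.g y.g + F.f (x.g * y.g) z.g) := by abel
      _ = x.u + y.u + z.u + (F.f y.g z.g + F.f x.g (y.g * z.g)) := by rw [h']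
      _ = x.u + (y.u + z.u + F.f y.g z.g) + F.f x.g (y.g * z.g) := by abel
  one_mul x := by
    refine TW.ext (one_mul _) ?_
    show 0 + x.u + F.f 1 x.g = x.u
    rw [F.norm_left]; abel
  mul_one x := by
    refine TW.ext (mul_one _) ?_
    show x.u + 0 + F.f x.g 1 = x.u
    rw [F.norm_right]; abel
  inv_mul_cancel x := by
    refine TW.ext (inv_mul_cancel _) ?_
    show (-x.u - F.f x.g x.g⁻¹) + x.u + F.f x.g⁻¹ x.g = 0
    rw [← F.inv_sym]; abel

lemma mul_g (x y : TW F) : (x * y).g = x.g * y.g := rfl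
lemma mul_u (x y : TW F) : (x * y).u = x.u + y.u + F.f x.g y.g := rfl
lemma one_g : (1 : TW F).g = 1 := rfl
lemma one_u : (1 : TW F).u = 0 := rfl
lemma mk_mul (g h : G) (u v : QZ) :
    (⟨g, u⟩ : TW F) * ⟨h, v⟩ = ⟨g * h, u + v + F.f g h⟩ := rfl

/-- Projection to `G`. -/
def proj : TW F →* G where
  toFun x := x.g
  map_one' := rfl
  map_mul' _ _ := rfl

lemma pow_g (x : TW F) (n : ℕ) : (x ^ n).g = x.g ^ n := by
  have := (proj (F := F)).map_pow x n
  exact this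

/-- Elements whose `G`-component commutes (and the cocycle is symmetric there) commute. -/
lemma commute_of (x y : TW F) (hg : x.g * y.g = y.g * x.g)
    (hf : F.f x.g y.g = F.f y.g x.g) : x * y = y * x := by
  refine TW.ext hg ?_
  show x.u + y.u + F.f x.g y.g = y.u + x.u + F.f y.g x.g
  rw [hf]; abel

/-- The central "vertical" elements `⟨1, u⟩`. -/
lemma zeta_central (u : QZ) (w : TW F) : (⟨1, u⟩ : TW F) * w = w * (⟨1, u⟩ : TW F) := by
  refine TW.ext ?_ ?_
  · show (1 : G) * w.g = w.g * 1
    rw [one_mul, mul_one]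
  · show u + w.u + F.f 1 w.g = w.u + u + F.f w.g 1
    rw [F.norm_left, F.norm_right]; abel

lemma zeta_pow (u : QZ) (n : ℕ) : (⟨1, u⟩ : TW F) ^ n = ⟨1, n • u⟩ := by
  induction n with
  | zero =>
    refine TW.ext ?_ ?_
    · show (1 : G) = 1; rfl
    · show (0 : QZ) = 0 • u; simp
  | succ n ih =>
    rw [pow_succ, ih, mk_mul, F.norm_right]
    refine TW.ext (by rw [one_mul]) ?_
    show n • u + u + 0 = (n + 1) • u
    rw [add_zero, succ_nsmul]

end TW

/-- Let `p` be an odd prime and `G` one of the groups `Φ₅(2111)` or `Φ₅(1⁵)` of order `p⁵`,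
i.e. generated by `f1,…,f5` with `Z(G) = ⟨f5⟩`, relations `[f1,f2] = [f3,f4] = f5`,
`[f1,f3] = [f2,f3] = [f1,f4] = [f2,f4] = 1`, `f5^p = 1`, together with (a) `f1^p = f5`,
`f2^p = f3^p = f4^p = 1`, or (b) `f1^p = f2^p = f3^p = f4^p = 1`. Then `B₀(G) = 0`. -/
theorem B0_phi5_eq_bot (p : ℕ) (hp : p.Prime) (hodd : Odd p)
    (G : Type) [Group G] [Finite G] (hcard : Nat.card G = p ^ 5)
    (f1 f2 f3 f4 f5 : G)
    (hgen : Subgroup.closure {f1, f2, f3, f4, f5} = ⊤)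
    (hcen : Subgroup.closure {f5} = Subgroup.center G)
    (r1 : cmt f1 f2 = f5) (r2 : cmt f3 f4 = f5)
    (r3 : cmt f1 f3 = 1) (r4 : cmt f2 f3 = 1) (r5 : cmt f1 f4 = 1) (r6 : cmt f2 f4 = 1)
    (h5p : f5 ^ p = 1)
    (hext : (f1 ^ p = f5 ∧ f2 ^ p = 1 ∧ f3 ^ p = 1 ∧ f4 ^ p = 1) ∨
            (f1 ^ p = 1 ∧ f2 ^ p = 1 ∧ f3 ^ p = 1 ∧ f4 ^ p = 1)) :
    B0 G = ⊥ := by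
  rw [eq_bot_iff]
  rintro x ⟨F, rfl, hres⟩
  rw [AddSubgroup.mem_bot, QuotientAddGroup.eq_zero_iff]
  show IsGrpCoboundary (F : G → G → QZ)
  have hp2 : 2 ≤ p := hp.two_le
  have hpne : p ≠ 0 := by omega
  set f₀ : G → G → QZ := (F : G → G → QZ) with hf₀
  have hco : IsGrpCocycle f₀ := F.2
  have hsym₀ : ∀ a b : G, a * b = b * a → f₀ a b = f₀ b a :=
    fun a b hab => sym_of_restricts hp hcard hres a b hab
  set C0 : QZ := f₀ 1 1 with hC0
  have hf1g : ∀ g : G, f₀ 1 g = C0 := by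
    intro g
    have h := hco 1 1 g
    simp only [one_mul] at h
    -- h : f₀ 1 1 + f₀ 1 g = f₀ 1 g + f₀ 1 g
    exact (add_right_cancel h).symm
  have hfg1 : ∀ g : G, f₀ g 1 = C0 := by
    intro g
    have h := hco g 1 1
    simp only [one_mul, mul_one] at h
    -- h : f₀ g 1 + f₀ g 1 = f₀ 1 1 + f₀ g 1
    exact add_right_cancel h
  set F' : NCocycle G :=
    { f := fun a b => f₀ a b - C0
      cocycle := by
        intro g h k
        have h2 : f₀ g h + f₀ (g * h) k = f₀ h k + f₀ g (h * k) := hco g h k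
        calc (f₀ g h - C0) + (f₀ (g * h) k - C0)
            = (f₀ g h + f₀ (g * h) k) - C0 - C0 := by abel
          _ = (f₀ h k + f₀ g (h * k)) - C0 - C0 := by rw [h2]
          _ = (f₀ h k - C0) + (f₀ g (h * k) - C0) := by abel
      norm_left := fun g => by
        show f₀ 1 g - C0 = 0
        rw [hf1g g]; exact sub_self _
      norm_right := fun g => by
        show f₀ g 1 - C0 = 0
        rw [hfg1 g]; exact sub_self _ } with hF'
  have hsym' : ∀ a b : G, a * b = b * a → F'.f a b = F'.f b a := by
    intro a b hab
    show f₀ a b - C0 = f₀ b a - C0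
    rw [hsym₀ a b hab]
  -- the twisted extension
  have hEc : ∀ x y : TW F', x.g * y.g = y.g * x.g → x * y = y * x :=
    fun x y hg => TW.commute_of x y hg (hsym' _ _ hg)
  set A : TW F' := ⟨f1, 0⟩ with hA
  set B : TW F' := ⟨f2, 0⟩ with hB
  set Cc : TW F' := ⟨f3, 0⟩ with hCc
  set D : TW F' := ⟨f4, 0⟩ with hD
  -- G-level relations
  have h5c : ∀ w : G, f5 * w = w * f5 := by
    have h5mem : f5 ∈ Subgroup.center G := by
      rw [← hcen]; exact Subgroup.subset_closure rfl
    intro w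
    exact ((Subgroup.mem_center_iff.mp h5mem) w).symm
  have h13 : f1 * f3 = f3 * f1 := commute_of_cmt_eq_one r3
  have h14 : f1 * f4 = f4 * f1 := commute_of_cmt_eq_one r5
  have h23 : f2 * f3 = f3 * f2 := commute_of_cmt_eq_one r4
  have h24 : f2 * f4 = f4 * f2 := commute_of_cmt_eq_one r6
  have h12 : f1 * f2 = f2 * f1 * f5 := by
    have h := cmt_mul f1 f2; rwa [r1] at h
  have h34 : f3 * f4 = f4 * f3 * f5 := by
    have h := cmt_mul f3 f4; rwa [r2] at h
  have hmixG : (f2 * f4⁻¹) * (f1 * f3) = (f1 * f3) * (f2 * f4⁻¹) := by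
    have h := key_calc h5c h5c h12 h34 h14 h23
    rwa [mul_inv_cancel, mul_one] at h
  -- E-level commutator facts
  set c : TW F' := cmt A B with hc
  have hcg : c.g = f5 := r1
  have hcc : ∀ w : TW F', c * w = w * c := by
    intro w
    apply hEc
    rw [hcg]
    exact h5c w.g
  set z2 : TW F' := cmt Cc D with hz2def
  have hz2g : z2.g = f5 := r2
  have hz2c : ∀ w : TW F', z2 * w = w * z2 := by
    intro w
    apply hEc
    rw [hz2g]
    exact h5c w.g
  have hABE : A * B = B * A * c := cmt_mul A B
  have hCDE : Cc * D = D * Cc * z2 := cmt_mul Cc D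
  have hADE : A * D = D * A := hEc _ _ h14
  have hBCE : B * Cc = Cc * B := hEc _ _ h23
  have hXYE : (B * D⁻¹) * (A * Cc) = (A * Cc) * (B * D⁻¹) := hEc _ _ hmixG
  have hz12 : c = z2 := by
    have hk := key_calc hcc hz2c hABE hCDE hADE hBCE
    rw [hXYE] at hk
    nth_rewrite 1 [← mul_one ((A * Cc) * (B * D⁻¹))] at hk
    have h1 : (1 : TW F') = z2 * c⁻¹ := mul_left_cancel hk
    exact (mul_inv_eq_one.mp h1.symm).symm
  -- extended power relations
  have hf234 : f2 ^ p = 1 ∧ f3 ^ p = 1 ∧ f4 ^ p = 1 := by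
    rcases hext with ⟨_, h⟩ | ⟨_, h⟩ <;> exact h
  have hf1p : f1 ^ p = f5 ∨ f1 ^ p = 1 := by
    rcases hext with ⟨h, _⟩ | ⟨h, _⟩
    exacts [Or.inl h, Or.inr h]
  have h1pc : ∀ w : G, f1 ^ p * w = w * f1 ^ p := by
    rcases hf1p with h | h <;> rw [h]
    · exact h5c
    · intro w; rw [one_mul, mul_one]
  have hApc : ∀ w : TW F', A ^ p * w = w * A ^ p := by
    intro w
    apply hEc
    rw [TW.pow_g]
    exact h1pc w.g
  have hcp : c ^ p = 1 := by
    have h1 : cmt (A ^ p) B = c ^ p := cmt_pow_left hcc p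
    rw [cmt_central_eq_one hApc] at h1
    exact h1.symm
  set d : TW F' := c⁻¹ with hd
  have hdc : ∀ w : TW F', d * w = w * d := central_inv hcc
  have hdp : d ^ p = 1 := by rw [hd, inv_pow, hcp, inv_one]
  have hdpow1 : d ^ (p - 1) = c := by
    have h1 : d ^ (p - 1) * d = 1 := by
      rw [← pow_succ]
      have hs : p - 1 + 1 = p := by omega
      rw [hs, hdp]
    have h2 : d ^ (p - 1) = d⁻¹ := eq_inv_of_mul_eq_one_left h1
    rw [h2, hd, inv_inv]
  -- corrections of generators
  have hcorr : ∀ X : TW F', X.g ^ p = 1 → ∃ u : QZ, (X * ⟨1, u⟩) ^ p = 1 := by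
    intro X hX
    obtain ⟨u, hu⟩ := QZ_exists_nsmul_eq p hpne (-(X ^ p).u)
    refine ⟨u, ?_⟩
    have hcm : Commute X (⟨1, u⟩ : TW F') := (TW.zeta_central u X).symm
    rw [hcm.mul_pow, TW.zeta_pow]
    refine TW.ext ?_ ?_
    · show (X ^ p).g * 1 = 1
      rw [TW.pow_g, hX, mul_one]
    · show (X ^ p).u + p • u + F'.f (X ^ p).g 1 = 0
      rw [F'.norm_right, hu]
      abel
  obtain ⟨u1, e1, hb1e⟩ : ∃ (u : QZ) (e : ℕ), (A * ⟨1, u⟩ : TW F') ^ p = d ^ e := by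
    rcases hf1p with h | h
    · obtain ⟨u, hu⟩ := QZ_exists_nsmul_eq p hpne (c.u - (A ^ p).u)
      refine ⟨u, p - 1, ?_⟩
      rw [hdpow1]
      have hcm : Commute A (⟨1, u⟩ : TW F') := (TW.zeta_central u A).symm
      rw [hcm.mul_pow, TW.zeta_pow]
      refine TW.ext ?_ ?_
      · show (A ^ p).g * 1 = c.g
        rw [TW.pow_g, mul_one, hcg]
        exact h
      · show (A ^ p).u + p • u + F'.f (A ^ p).g 1 = c.u
        rw [F'.norm_right, hu]
        abel
    · obtain ⟨u, hu⟩ := hcorr A (by rw [show A.g = f1 from rfl, h])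
      exact ⟨u, 0, by rw [pow_zero, hu]⟩
  obtain ⟨u2, hb2e⟩ := hcorr B hf234.1
  obtain ⟨u3, hb3e⟩ := hcorr Cc hf234.2.1
  obtain ⟨u4, hb4e⟩ := hcorr D hf234.2.2
  set b1 : TW F' := A * ⟨1, u1⟩ with hb1def
  set b2 : TW F' := B * ⟨1, u2⟩ with hb2def
  set b3 : TW F' := Cc * ⟨1, u3⟩ with hb3def
  set b4 : TW F' := D * ⟨1, u4⟩ with hb4def
  have hb1b2 : b1 * b2 = b2 * b1 * c :=
    central_shift_rel hABE (TW.zeta_central u1) (TW.zeta_central u2)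
  have h21 : b2 * b1 = b1 * b2 * d := by
    have h := rel_symm hb1b2
    rwa [← hd] at h
  have hb3b4 : b3 * b4 = b4 * b3 * c := by
    have h := central_shift_rel hCDE (TW.zeta_central u3) (TW.zeta_central u4)
    rwa [← hz12] at h
  have h43 : b4 * b3 = b3 * b4 * d := by
    have h := rel_symm hb3b4
    rwa [← hd] at h
  have h31 : b3 * b1 = b1 * b3 :=
    central_shift_comm (hEc Cc A h13.symm) (TW.zeta_central u3) (TW.zeta_central u1)
  have h41 : b4 * b1 = b1 * b4 :=
    central_shift_comm (hEc D A h14.symm) (TW.zeta_central u4) (TW.zeta_central u1)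
  have h32 : b3 * b2 = b2 * b3 :=
    central_shift_comm (hEc Cc B h23.symm) (TW.zeta_central u3) (TW.zeta_central u2)
  have h42 : b4 * b2 = b2 * b4 :=
    central_shift_comm (hEc D B h24.symm) (TW.zeta_central u4) (TW.zeta_central u2)
  obtain ⟨S, hS1, hS2, hS3, hS4, hSd, hSfin, hScard⟩ :=
    collection p hp2 b1 b2 b3 b4 d hdc h21 h43 h31 h41 h32 h42 e1 0 0 0
      hb1e (by rw [pow_zero]; exact hb2e) (by rw [pow_zero]; exact hb3e)
      (by rw [pow_zero]; exact hb4e) hdp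
  -- the projection restricted to S is an isomorphism onto G
  have hb1g : TW.proj b1 = f1 := mul_one f1
  have hb2g : TW.proj b2 = f2 := mul_one f2
  have hb3g : TW.proj b3 = f3 := mul_one f3
  have hb4g : TW.proj b4 = f4 := mul_one f4
  have hcS : c ∈ S := by
    have : c = d⁻¹ := by rw [hd, inv_inv]
    rw [this]
    exact inv_mem hSd
  have hmapS : Subgroup.map (TW.proj (F := F')) S = ⊤ := by
    rw [eq_top_iff, ← hgen, Subgroup.closure_le]
    rintro z (rfl | rfl | rfl | rfl | rfl)
    · exact ⟨b1, hS1, hb1g⟩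
    · exact ⟨b2, hS2, hb2g⟩
    · exact ⟨b3, hS3, hb3g⟩
    · exact ⟨b4, hS4, hb4g⟩
    · exact ⟨c, hcS, hcg⟩
  set φ : ↥S →* G := (TW.proj (F := F')).comp S.subtype with hφ
  have hφval : ∀ s : ↥S, φ s = (s : TW F').g := fun s => rfl
  have hφsurj : Function.Surjective φ := by
    intro g
    have hg : g ∈ Subgroup.map (TW.proj (F := F')) S := by rw [hmapS]; trivial
    obtain ⟨s, hs, hsg⟩ := hg
    exact ⟨⟨s, hs⟩, hsg⟩
  haveI hSfin' : Finite ↥S := hSfin.to_subtype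
  have hcard1 : Nat.card G ≤ Nat.card ↥S := Nat.card_le_card_of_surjective φ hφsurj
  have hcardS : Nat.card ↥S = Nat.card G := by
    rw [hcard] at hcard1 ⊢
    omega
  have hφbij : Function.Bijective φ :=
    (Nat.bijective_iff_surjective_and_card φ).mpr ⟨hφsurj, hcardS⟩
  set eqv : ↥S ≃* G := MulEquiv.ofBijective φ hφbij with heqv
  set σ : G → TW F' := fun g => ((eqv.symm g : ↥S) : TW F') with hσ
  have hσhom : ∀ g h : G, σ (g * h) = σ g * σ h := by
    intro g h
    show ((eqv.symm (g * h) : ↥S) : TW F') = _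
    rw [map_mul]
    rfl
  have hσg : ∀ g : G, (σ g).g = g := by
    intro g
    show TW.proj ((eqv.symm g : ↥S) : TW F') = g
    exact eqv.apply_symm_apply g
  refine ⟨fun g => C0 - (σ g).u, ?_⟩
  intro g h
  have h1 := hσhom g h
  have h2 : (σ g * σ h).u = (σ g).u + (σ h).u + F'.f g h := by
    rw [TW.mul_u, hσg g, hσg h]
  have h3 : (σ (g * h)).u = (σ g).u + (σ h).u + (f₀ g h - C0) := by
    rw [h1, h2]
  have h4 : f₀ g h = (σ (g * h)).u - (σ g).u - (σ h).u + C0 := by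
    rw [h3]; abel
  rw [h4]
  simp only [sub_eq_add_neg, neg_add, neg_neg]; abel
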